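/- Let m, n ≥ 2 and let u ∈ ℝ^{m-1}, v ∈ ℝ^{n-1}. Define the matrix Q ∈ ℝ^{m×n} as the product of the m×2 matrix whose first column is (u; 0) and second column is (0; -u), with the 2×n matrix whose first row is (0, vᵀ) and second row is (vᵀ, 0). Then S(Q) = 0, i.e., Q lies in the rank-two null space of the lifted linear convolution operator S. -/

import Mathlib

open Finset

noncomputable section

/-- Extend a `Fin d`-indexed vector to `ℕ` by zero. -/
def ext0 {d : ℕ} (u : Fin d → ℝ) : ℕ → ℝ := fun j => if h : j < d then u ⟨j, h⟩ else 0

/-- Shifted (delayed by one) extension: value at `j` is `u (j-1)`, zero at `j = 0`. -/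
def extm {d : ℕ} (u : Fin d → ℝ) : ℕ → ℝ := fun j => if j = 0 then 0 else ext0 u (j - 1)

/-- Linear convolution of `x ∈ ℝ^m` and `y ∈ ℝ^n`, a vector in `ℝ^{m+n-1}` (0-indexed). -/
def conv {m n : ℕ} (x : Fin m → ℝ) (y : Fin n → ℝ) : Fin (m + n - 1) → ℝ :=
  fun l => ∑ j : Fin m, ∑ k : Fin n, if (j : ℕ) + (k : ℕ) = (l : ℕ) then x j * y k else 0

/-- The lifted linear convolution operator, given explicitly. -/
def liftS {m n : ℕ} (W : Matrix (Fin m) (Fin n) ℝ) : Fin (m + n - 1) → ℝ :=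
  fun l => ∑ j : Fin m, ∑ k : Fin n, if (j : ℕ) + (k : ℕ) = (l : ℕ) then W j k else 0

lemma finsum_to_antidiag {m n : ℕ} (f : ℕ → ℕ → ℝ)
    (hf1 : ∀ j k, m ≤ j → f j k = 0) (hf2 : ∀ j k, n ≤ k → f j k = 0) (l : ℕ) :
    (∑ j : Fin m, ∑ k : Fin n, if (j : ℕ) + (k : ℕ) = l then f j k else 0)
      = ∑ p ∈ Finset.HasAntidiagonal.antidiagonal l, f p.1 p.2 := by
  have h1 : ∀ j : Fin m, (∑ k : Fin n, if (j : ℕ) + (k : ℕ) = l then f j k else 0)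
      = ∑ k ∈ range n, if (j : ℕ) + k = l then f j k else 0 := by
    intro j
    exact Fin.sum_univ_eq_sum_range (fun k => if (j : ℕ) + k = l then f j k else 0) n
  simp_rw [h1]
  rw [Fin.sum_univ_eq_sum_range
    (fun j => ∑ k ∈ range n, if j + k = l then f j k else 0) m]
  set M := m + n + l + 1 with hM
  have hsub1 : range m ⊆ range M := by
    apply range_subset_range.2; omega
  have hsub2 : range n ⊆ range M := by
    apply range_subset_range.2; omega
  have step1 : (∑ j ∈ range m, ∑ k ∈ range n, if j + k = l then f j k else 0)
      = ∑ j ∈ range M, ∑ k ∈ range M, if j + k = l then f j k else 0 := by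
    rw [Finset.sum_subset hsub1]
    · apply Finset.sum_congr rfl
      intro j hj
      rw [Finset.sum_subset hsub2]
      intro k _ hk
      simp only [mem_range, not_lt] at hk
      simp [hf2 j k hk]
    · intro j _ hj
      simp only [mem_range, not_lt] at hj
      apply Finset.sum_eq_zero
      intro k _
      simp [hf1 j k hj]
  rw [step1]
  have step2 : ∀ j ∈ range M, (∑ k ∈ range M, if j + k = l then f j k else 0)
      = if j ≤ l then f j (l - j) else 0 := by
    intro j _
    by_cases hj : j ≤ l
    · rw [Finset.sum_eq_single (l - j)]
      · simp [Nat.add_sub_cancel' hj, hj]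
      · intro k _ hk
        have : j + k ≠ l := by omega
        simp [this]
      · intro h
        simp only [mem_range, not_lt] at h
        omega
    · simp only [hj, if_false]
      apply Finset.sum_eq_zero
      intro k _
      have : j + k ≠ l := by omega
      simp [this]
  rw [Finset.sum_congr rfl step2]
  rw [Finset.Nat.sum_antidiagonal_eq_sum_range_succ_mk]
  rw [← Finset.sum_subset (show range (l+1) ⊆ range M by apply range_subset_range.2; omega)]
  · apply Finset.sum_congr rfl
    intro j hj
    simp only [mem_range] at hj
    simp [Nat.lt_succ_iff.mp hj]
  · intro j _ hj
    simp only [mem_range, not_lt] at hj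
    have : ¬ j ≤ l := by omega
    simp [this]

lemma shift_eq (a b : ℕ → ℝ) (l : ℕ) :
    ∑ p ∈ Finset.HasAntidiagonal.antidiagonal l, a p.1 * (if p.2 = 0 then 0 else b (p.2 - 1))
      = ∑ p ∈ Finset.HasAntidiagonal.antidiagonal l, (if p.1 = 0 then 0 else a (p.1 - 1)) * b p.2 := by
  cases l with
  | zero => simp
  | succ n =>
    conv_lhs => rw [Finset.Nat.antidiagonal_succ']
    conv_rhs => rw [Finset.Nat.antidiagonal_succ]
    simp [Finset.sum_cons, Finset.sum_map]

/-- the matrix `Q = [u,0;0,-u]·[0,vᵀ;vᵀ,0]` lies in the rank-two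
null space of the lifted linear convolution operator. -/
theorem rank_two_nullspace (m n : ℕ) (hm : 2 ≤ m) (hn : 2 ≤ n)
    (u : Fin (m - 1) → ℝ) (v : Fin (n - 1) → ℝ)
    (Q : Matrix (Fin m) (Fin n) ℝ)
    (hQ : ∀ (i : Fin m) (l : Fin n),
      Q i l = ext0 u i * extm v l - extm u i * ext0 v l) :
    liftS Q = 0 := by
  funext l
  simp only [liftS, Pi.zero_apply]
  have key : ∀ (j : Fin m) (k : Fin n), (if (j : ℕ) + (k : ℕ) = (l : ℕ) then Q j k else 0)
      = (if (j : ℕ) + (k : ℕ) = (l : ℕ) then ext0 u j * extm v k else 0)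
        - (if (j : ℕ) + (k : ℕ) = (l : ℕ) then extm u j * ext0 v k else 0) := by
    intro j k
    rw [hQ]
    split <;> simp
  simp_rw [key, Finset.sum_sub_distrib]
  have hz1 : ∀ j k : ℕ, m ≤ j → ext0 u j * extm v k = 0 := by
    intro j k hj
    have : ext0 u j = 0 := by
      simp only [ext0]
      rw [dif_neg]; omega
    simp [this]
  have hz2 : ∀ j k : ℕ, n ≤ k → ext0 u j * extm v k = 0 := by
    intro j k hk
    have : extm v k = 0 := by
      simp only [extm, ext0]
      have : ¬ k = 0 := by omega
      rw [if_neg this, dif_neg]; omega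
    simp [this]
  have hz3 : ∀ j k : ℕ, m ≤ j → extm u j * ext0 v k = 0 := by
    intro j k hj
    have : extm u j = 0 := by
      simp only [extm, ext0]
      have : ¬ j = 0 := by omega
      rw [if_neg this, dif_neg]; omega
    simp [this]
  have hz4 : ∀ j k : ℕ, n ≤ k → extm u j * ext0 v k = 0 := by
    intro j k hk
    have : ext0 v k = 0 := by
      simp only [ext0]
      rw [dif_neg]; omega
    simp [this]
  rw [finsum_to_antidiag (fun j k => ext0 u j * extm v k) hz1 hz2,
    finsum_to_antidiag (fun j k => extm u j * ext0 v k) hz3 hz4]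
  have := shift_eq (ext0 u) (ext0 v) (l : ℕ)
  simp only [extm] at *
  rw [this]
  ring
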